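/- Let f: ℝᵈ → ℝ be convex and differentiable, C ⊆ ℝᵈ convex, and x★ a minimizer over C of F(x) := f(x) + η⁻¹D(x,x') where D is a Bregman divergence generated by a differentiable convex φ and η > 0. Then for every x ∈ C: f(x★) + η⁻¹D(x★,x') ≤ f(x) + η⁻¹(D(x,x') − D(x,x★)). -/

import Mathlib

open scoped RealInnerProductSpace

/-- Bregman divergence induced by `φ` with gradient map `φ'`. -/
noncomputable def bregmanDiv' {d : ℕ}
    (φ : EuclideanSpace ℝ (Fin d) → ℝ) (φ' : EuclideanSpace ℝ (Fin d) → EuclideanSpace ℝ (Fin d))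
    (u v : EuclideanSpace ℝ (Fin d)) : ℝ :=
  φ u - φ v - ⟪φ' v, u - v⟫

-- convex gradient inequality
lemma convex_grad_ineq {d : ℕ} {f : EuclideanSpace ℝ (Fin d) → ℝ}
    (hfc : ConvexOn ℝ Set.univ f) {L : EuclideanSpace ℝ (Fin d) →L[ℝ] ℝ}
    {a : EuclideanSpace ℝ (Fin d)} (hL : HasFDerivAt f L a)
    (v : EuclideanSpace ℝ (Fin d)) : f a + L v ≤ f (a + v) := by
  set A : ℝ →ᵃ[ℝ] EuclideanSpace ℝ (Fin d) := AffineMap.lineMap a (a + v) with hA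
  have hg : ConvexOn ℝ (A ⁻¹' Set.univ) (f ∘ A) := hfc.comp_affineMap A
  have hAt : ∀ t : ℝ, A t = a + t • v := by
    intro t; simp [hA, AffineMap.lineMap_apply]; module
  have hder : HasDerivAt (f ∘ A) (L v) 0 := by
    have h1 : HasDerivAt (fun t : ℝ => a + t • v) v 0 := by
      simpa using ((hasDerivAt_id (0:ℝ)).smul_const v).const_add a
    have : HasDerivAt (fun t : ℝ => f (a + t • v)) (L v) 0 := by
      have h2 : HasFDerivAt f L (a + (0:ℝ) • v) := by simpa using hL
      exact h2.comp_hasDerivAt (x := (0:ℝ)) h1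
    refine this.congr_deriv rfl |>.congr_of_eventuallyEq ?_
    filter_upwards with t using by simp [Function.comp, hAt t]
  have := hg.le_slope_of_hasDerivAt (x := (0:ℝ)) (y := (1:ℝ)) (by simp) (by simp)
    one_pos hder
  rw [slope_def_field] at this
  simp only [Function.comp, hAt] at this
  simp only [zero_smul, add_zero, one_smul] at this
  linarith


/-- Single-player pushback lemma for mirror descent: if `x★` minimizes
`f(x) + η⁻¹ D(x,x')` over a convex set `C`, then
`f(x★) + η⁻¹ D(x★,x') ≤ f(x) + η⁻¹ (D(x,x') − D(x,x★))` for all `x ∈ C`. -/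
theorem stmt_5 {d : ℕ}
    (f : EuclideanSpace ℝ (Fin d) → ℝ)
    (hfc : ConvexOn ℝ Set.univ f) (hfd : Differentiable ℝ f)
    (C : Set (EuclideanSpace ℝ (Fin d))) (hC : Convex ℝ C)
    (φ : EuclideanSpace ℝ (Fin d) → ℝ)
    (φ' : EuclideanSpace ℝ (Fin d) → EuclideanSpace ℝ (Fin d))
    (hφc : ConvexOn ℝ Set.univ φ)
    (hφ' : ∀ v, HasGradientAt φ (φ' v) v)
    (η : ℝ) (hη : 0 < η)
    (x' xs : EuclideanSpace ℝ (Fin d)) (hxsC : xs ∈ C)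
    (hmin : ∀ x ∈ C, f xs + η⁻¹ * bregmanDiv' φ φ' xs x'
        ≤ f x + η⁻¹ * bregmanDiv' φ φ' x x') :
    ∀ x ∈ C, f xs + η⁻¹ * bregmanDiv' φ φ' xs x'
        ≤ f x + η⁻¹ * (bregmanDiv' φ φ' x x' - bregmanDiv' φ φ' x xs) := by
  intro x hxC
  -- the modified objective g, differing from F by a constant
  set g : EuclideanSpace ℝ (Fin d) → ℝ :=
    fun u => f u + η⁻¹ * (φ u - ⟪φ' x', u⟫) with hg
  have hgF : ∀ u, g u = (f u + η⁻¹ * bregmanDiv' φ φ' u x')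
      + η⁻¹ * (φ x' - ⟪φ' x', x'⟫) := by
    intro u
    simp only [hg, bregmanDiv', inner_sub_right]
    ring
  have hming : IsMinOn g C xs := by
    intro u hu
    simp only [Set.mem_setOf_eq, hgF]
    have := hmin u hu
    linarith
  -- derivative of g at xs
  set Lf : EuclideanSpace ℝ (Fin d) →L[ℝ] ℝ := fderiv ℝ f xs with hLf
  have hLfd : HasFDerivAt f Lf xs := (hfd xs).hasFDerivAt
  have hφxs : HasFDerivAt φ (InnerProductSpace.toDual ℝ _ (φ' xs)) xs := hφ' xs
  have hinner : HasFDerivAt (fun u : EuclideanSpace ℝ (Fin d) => ⟪φ' x', u⟫)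
      (innerSL ℝ (φ' x')) xs := (innerSL ℝ (φ' x')).hasFDerivAt
  set Lg : EuclideanSpace ℝ (Fin d) →L[ℝ] ℝ :=
    Lf + η⁻¹ • ((InnerProductSpace.toDual ℝ _ (φ' xs) : _ →L[ℝ] ℝ) - innerSL ℝ (φ' x'))
    with hLg
  have hgd : HasFDerivAt g Lg xs := by
    exact (hLfd.add (((hφxs.sub hinner)).const_smul η⁻¹)).congr_of_eventuallyEq
      (Filter.Eventually.of_forall fun u => by simp [hg, smul_eq_mul])
  -- variational inequality
  have hcone : x - xs ∈ posTangentConeAt C xs :=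
    sub_mem_posTangentConeAt_of_segment_subset (hC.segment_subset hxsC hxC)
  have hvar : 0 ≤ Lg (x - xs) :=
    IsLocalMinOn.hasFDerivWithinAt_nonneg
      (hming.filter_mono (Filter.le_principal_iff.2 self_mem_nhdsWithin)) (hgd.hasFDerivWithinAt) hcone
  -- convex gradient inequality
  have hgrad : f xs + Lf (x - xs) ≤ f x := by
    have := convex_grad_ineq hfc hLfd (x - xs)
    simpa using this
  have hLgval : Lg (x - xs) = Lf (x - xs) + η⁻¹ * (⟪φ' xs, x - xs⟫ - ⟪φ' x', x - xs⟫) := by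
    simp [hLg, InnerProductSpace.toDual_apply_apply, smul_eq_mul]
  -- algebra
  have key : bregmanDiv' φ φ' x x' - bregmanDiv' φ φ' x xs - bregmanDiv' φ φ' xs x'
      = ⟪φ' xs, x - xs⟫ - ⟪φ' x', x - xs⟫ := by
    simp only [bregmanDiv']
    have h1 : (⟪φ' x', x - x'⟫ : ℝ) = ⟪φ' x', x - xs⟫ + ⟪φ' x', xs - x'⟫ := by
      rw [← inner_add_right]; congr 1; abel
    rw [h1]; ring
  rw [hLgval] at hvar
  have hηpos : (0:ℝ) < η⁻¹ := inv_pos.2 hη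
  nlinarith [hvar, hgrad, key]
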